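/- Let Q ∈ ℝ^{n×n} be symmetric positive definite with smallest eigenvalue λ₁ > 0, and let Y₁, …, Yₙ ∈ ℂ^{m×m} and an invertible F ∈ ℂ^{m×m} be given. If max_i ‖F⁻¹ Yᵢ‖ < λ₁ (operator norm), then the operator norm of (Q ⊗ F)⁻¹ · diag(Y₁, …, Yₙ) is strictly less than 1. -/

import Mathlib

open Matrix Kronecker

/-- Operator norm of a matrix induced by the Euclidean (ℓ²) norms,
i.e. the largest singular value. -/
noncomputable def opNorm {𝕜 : Type*} [RCLike 𝕜] {k n : Type*} [Fintype k] [Fintype n]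
    [DecidableEq n] (M : Matrix k n 𝕜) : ℝ :=
  ‖LinearMap.toContinuousLinearMap (Matrix.toEuclideanLin M)‖

open scoped Matrix.Norms.L2Operator

lemma opNorm_eq_l2 {k l : Type*} [Fintype k] [Fintype l] [DecidableEq l]
    (M : Matrix k l ℂ) : opNorm M = ‖M‖ := rfl





lemma norm_block_fst {k l : Type*} [Fintype k] [Fintype l] [DecidableEq k] [DecidableEq l]
    (Z : k → Matrix l l ℂ) (A : Matrix (k × l) (k × l) ℂ)
    (hA : ∀ i a j b, A (i, a) (j, b) = if i = j then Z i a b else 0)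
    {c : ℝ} (hc : 0 ≤ c) (hZ : ∀ i, ‖Z i‖ ≤ c) : ‖A‖ ≤ c := by
  rw [Matrix.l2_opNorm_def]
  refine ContinuousLinearMap.opNorm_le_bound _ hc fun x => ?_
  have hco : ∀ i a, (Matrix.toEuclideanLin A x) (i, a)
      = (Z i *ᵥ fun b => x (i, b)) a := by
    intro i a
    show (A *ᵥ fun q => x q) (i, a) = _
    simp only [Matrix.mulVec, dotProduct, Fintype.sum_prod_type, hA, ite_mul, zero_mul]
    rw [Finset.sum_eq_single i]
    · simp
    · intro j _ hj
      simp [Ne.symm hj]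
    · simp
  show ‖Matrix.toEuclideanLin A x‖ ≤ c * ‖x‖
  refine le_of_pow_le_pow_left₀ two_ne_zero (by positivity) ?_
  have hnx : ‖x‖ ^ 2 = ∑ p : k × l, ‖x p‖ ^ 2 := by
    rw [EuclideanSpace.norm_eq, Real.sq_sqrt (by positivity)]
  have hnA : ‖Matrix.toEuclideanLin A x‖ ^ 2
      = ∑ i, ∑ a, ‖(Z i *ᵥ fun b => x (i, b)) a‖ ^ 2 := by
    rw [EuclideanSpace.norm_eq, Real.sq_sqrt (by positivity), Fintype.sum_prod_type]
    exact Finset.sum_congr rfl fun i _ => Finset.sum_congr rfl fun a _ => by rw [hco]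
  have hb : ∀ i, ∑ a, ‖(Z i *ᵥ fun b => x (i, b)) a‖ ^ 2
      ≤ c ^ 2 * ∑ b, ‖x (i, b)‖ ^ 2 := by
    intro i
    have h1 := Matrix.l2_opNorm_mulVec (Z i) ((WithLp.equiv 2 (l → ℂ)).symm fun b => x (i, b))
    have e1 : ‖(EuclideanSpace.equiv l ℂ).symm
        (Z i *ᵥ (WithLp.equiv 2 (l → ℂ)).symm fun b => x (i, b))‖ ^ 2
        = ∑ a, ‖(Z i *ᵥ fun b => x (i, b)) a‖ ^ 2 := by
      rw [EuclideanSpace.norm_eq, Real.sq_sqrt (by positivity)]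
      rfl
    have e2 : ‖(WithLp.equiv 2 (l → ℂ)).symm fun b => x (i, b)‖ ^ 2
        = ∑ b, ‖x (i, b)‖ ^ 2 := by
      rw [EuclideanSpace.norm_eq, Real.sq_sqrt (by positivity)]
      rfl
    calc ∑ a, ‖(Z i *ᵥ fun b => x (i, b)) a‖ ^ 2
        = ‖(EuclideanSpace.equiv l ℂ).symm
            (Z i *ᵥ (WithLp.equiv 2 (l → ℂ)).symm fun b => x (i, b))‖ ^ 2 := e1.symm
      _ ≤ (‖Z i‖ * ‖(WithLp.equiv 2 (l → ℂ)).symm fun b => x (i, b)‖) ^ 2 := by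
          exact pow_le_pow_left₀ (norm_nonneg _) h1 2
      _ ≤ (c * ‖(WithLp.equiv 2 (l → ℂ)).symm fun b => x (i, b)‖) ^ 2 := by
          gcongr
          exact hZ i
      _ = c ^ 2 * ∑ b, ‖x (i, b)‖ ^ 2 := by rw [mul_pow, e2]
  calc ‖Matrix.toEuclideanLin A x‖ ^ 2
      = ∑ i, ∑ a, ‖(Z i *ᵥ fun b => x (i, b)) a‖ ^ 2 := hnA
    _ ≤ ∑ i, c ^ 2 * ∑ b, ‖x (i, b)‖ ^ 2 := Finset.sum_le_sum fun i _ => hb i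
    _ = c ^ 2 * ∑ p : k × l, ‖x p‖ ^ 2 := by
        rw [← Finset.mul_sum, Fintype.sum_prod_type]
    _ = (c * ‖x‖) ^ 2 := by rw [mul_pow, hnx]


lemma norm_block_snd {k l : Type*} [Fintype k] [Fintype l] [DecidableEq k] [DecidableEq l]
    (Z : k → Matrix l l ℂ) (A : Matrix (l × k) (l × k) ℂ)
    (hA : ∀ a i b j, A (a, i) (b, j) = if i = j then Z i a b else 0)
    {c : ℝ} (hc : 0 ≤ c) (hZ : ∀ i, ‖Z i‖ ≤ c) : ‖A‖ ≤ c := by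
  rw [Matrix.l2_opNorm_def]
  refine ContinuousLinearMap.opNorm_le_bound _ hc fun x => ?_
  have hco : ∀ a i, (Matrix.toEuclideanLin A x) (a, i)
      = (Z i *ᵥ fun b => x (b, i)) a := by
    intro a i
    show (A *ᵥ fun q => x q) (a, i) = _
    simp only [Matrix.mulVec, dotProduct, Fintype.sum_prod_type, hA, ite_mul, zero_mul,
      Finset.sum_ite_eq, Finset.mem_univ, if_true]
  show ‖Matrix.toEuclideanLin A x‖ ≤ c * ‖x‖
  refine le_of_pow_le_pow_left₀ two_ne_zero (by positivity) ?_
  have hnx : ‖x‖ ^ 2 = ∑ p : l × k, ‖x p‖ ^ 2 := by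
    rw [EuclideanSpace.norm_eq, Real.sq_sqrt (by positivity)]
  have hb : ∀ i, ∑ a, ‖(Z i *ᵥ fun b => x (b, i)) a‖ ^ 2
      ≤ c ^ 2 * ∑ b, ‖x (b, i)‖ ^ 2 := by
    intro i
    have h1 := Matrix.l2_opNorm_mulVec (Z i) ((WithLp.equiv 2 (l → ℂ)).symm fun b => x (b, i))
    have e1 : ‖(EuclideanSpace.equiv l ℂ).symm
        (Z i *ᵥ (WithLp.equiv 2 (l → ℂ)).symm fun b => x (b, i))‖ ^ 2
        = ∑ a, ‖(Z i *ᵥ fun b => x (b, i)) a‖ ^ 2 := by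
      rw [EuclideanSpace.norm_eq, Real.sq_sqrt (by positivity)]
      rfl
    have e2 : ‖(WithLp.equiv 2 (l → ℂ)).symm fun b => x (b, i)‖ ^ 2
        = ∑ b, ‖x (b, i)‖ ^ 2 := by
      rw [EuclideanSpace.norm_eq, Real.sq_sqrt (by positivity)]
      rfl
    calc ∑ a, ‖(Z i *ᵥ fun b => x (b, i)) a‖ ^ 2
        = ‖(EuclideanSpace.equiv l ℂ).symm
            (Z i *ᵥ (WithLp.equiv 2 (l → ℂ)).symm fun b => x (b, i))‖ ^ 2 := e1.symm
      _ ≤ (‖Z i‖ * ‖(WithLp.equiv 2 (l → ℂ)).symm fun b => x (b, i)‖) ^ 2 := by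
          exact pow_le_pow_left₀ (norm_nonneg _) h1 2
      _ ≤ (c * ‖(WithLp.equiv 2 (l → ℂ)).symm fun b => x (b, i)‖) ^ 2 := by
          gcongr
          exact hZ i
      _ = c ^ 2 * ∑ b, ‖x (b, i)‖ ^ 2 := by rw [mul_pow, e2]
  calc ‖Matrix.toEuclideanLin A x‖ ^ 2
      = ∑ a, ∑ i, ‖(Matrix.toEuclideanLin A x) (a, i)‖ ^ 2 := by
        rw [EuclideanSpace.norm_eq, Real.sq_sqrt (by positivity), Fintype.sum_prod_type]
    _ = ∑ i, ∑ a, ‖(Z i *ᵥ fun b => x (b, i)) a‖ ^ 2 := by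
        rw [Finset.sum_comm]
        exact Finset.sum_congr rfl fun i _ => Finset.sum_congr rfl fun a _ => by rw [hco]
    _ ≤ ∑ i, c ^ 2 * ∑ b, ‖x (b, i)‖ ^ 2 := Finset.sum_le_sum fun i _ => hb i
    _ = c ^ 2 * ∑ p : l × k, ‖x p‖ ^ 2 := by
        rw [← Finset.mul_sum, Fintype.sum_prod_type, Finset.sum_comm]
    _ = (c * ‖x‖) ^ 2 := by rw [mul_pow, hnx]

lemma norm_diag {k : Type*} [Fintype k] [DecidableEq k]
    (v : k → ℂ) {c : ℝ} (hc : 0 ≤ c) (hv : ∀ i, ‖v i‖ ≤ c) :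
    ‖Matrix.diagonal v‖ ≤ c := by
  rw [Matrix.l2_opNorm_def]
  refine ContinuousLinearMap.opNorm_le_bound _ hc fun x => ?_
  show ‖Matrix.toEuclideanLin (Matrix.diagonal v) x‖ ≤ c * ‖x‖
  refine le_of_pow_le_pow_left₀ two_ne_zero (by positivity) ?_
  have hco : ∀ i, (Matrix.toEuclideanLin (Matrix.diagonal v) x) i = v i * x i := by
    intro i
    show (Matrix.diagonal v *ᵥ fun q => x q) i = _
    rw [Matrix.mulVec_diagonal]
  calc ‖Matrix.toEuclideanLin (Matrix.diagonal v) x‖ ^ 2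
      = ∑ i, ‖v i * x i‖ ^ 2 := by
        rw [EuclideanSpace.norm_eq, Real.sq_sqrt (by positivity)]
        exact Finset.sum_congr rfl fun i _ => by rw [hco]
    _ ≤ ∑ i, c ^ 2 * ‖x i‖ ^ 2 := by
        refine Finset.sum_le_sum fun i _ => ?_
        rw [norm_mul, mul_pow]
        gcongr
        exact hv i
    _ = c ^ 2 * ∑ i, ‖x i‖ ^ 2 := by rw [← Finset.mul_sum]
    _ = (c * ‖x‖) ^ 2 := by
        rw [mul_pow, EuclideanSpace.norm_eq, Real.sq_sqrt (by positivity)]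


lemma norm_map_inv_le {n : Type*} [Fintype n] [DecidableEq n] [Nonempty n]
    (Q : Matrix n n ℝ) (hQ : Q.IsHermitian)
    (lam1 : ℝ) (hlam_pos : 0 < lam1) (hlb : ∀ i, lam1 ≤ hQ.eigenvalues i)
    (hdiag : ∀ i, ‖((hQ.eigenvalues i : ℂ))⁻¹‖ ≤ lam1⁻¹) :
    ‖(Q.map (fun x : ℝ => (x : ℂ)))⁻¹‖ ≤ lam1⁻¹ := by
  haveI : Nontrivial (Matrix n n ℂ) := by
    refine ⟨0, 1, fun h => ?_⟩
    have := congr_fun (congr_fun h (Classical.arbitrary n)) (Classical.arbitrary n)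
    simp at this
  classical
  set U : Matrix n n ℝ := (hQ.eigenvectorUnitary : Matrix n n ℝ) with hU
  set V : Matrix n n ℂ := U.map (fun x : ℝ => (x : ℂ)) with hV
  have hmap : ∀ (A B : Matrix n n ℝ),
      (A * B).map (fun x : ℝ => (x : ℂ)) = A.map (fun x : ℝ => (x : ℂ)) * B.map (fun x : ℝ => (x : ℂ)) := by
    intro A B
    exact Matrix.map_mul (f := Complex.ofRealHom)
  have hstar : (star U).map (fun x : ℝ => (x : ℂ)) = star V := by
    show (Uᴴ).map _ = (U.map _)ᴴ
    exact Matrix.conjTranspose_map _ (fun a => (Complex.conj_ofReal a).symm)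
  have hU1 : star U * U = 1 := Matrix.mem_unitaryGroup_iff'.mp hQ.eigenvectorUnitary.2
  have hU2 : U * star U = 1 := Matrix.mem_unitaryGroup_iff.mp hQ.eigenvectorUnitary.2
  have hone : (1 : Matrix n n ℝ).map (fun x : ℝ => (x : ℂ)) = 1 := by
    exact Matrix.map_one _ Complex.ofReal_zero Complex.ofReal_one
  have hV1 : star V * V = 1 := by rw [← hstar, ← hmap, hU1, hone]
  have hV2 : V * star V = 1 := by rw [← hstar, ← hmap, hU2, hone]
  set D : Matrix n n ℂ := Matrix.diagonal fun i => ((hQ.eigenvalues i : ℝ) : ℂ) with hD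
  set E : Matrix n n ℂ := Matrix.diagonal fun i => (((hQ.eigenvalues i : ℝ) : ℂ))⁻¹ with hE
  have hQc : Q.map (fun x : ℝ => (x : ℂ)) = V * D * star V := by
    conv_lhs => rw [hQ.spectral_theorem, Unitary.conjStarAlgAut_apply]
    rw [hmap, hmap, hstar]
    congr 1
    congr 1
    rw [hD]
    rw [Matrix.diagonal_map (by simp)]
    congr 1
  have hED : E * D = 1 := by
    rw [hE, hD, Matrix.diagonal_mul_diagonal]
    rw [show (fun i => (((hQ.eigenvalues i : ℝ) : ℂ))⁻¹ * ((hQ.eigenvalues i : ℝ) : ℂ)) = fun _ => (1:ℂ) from ?_]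
    · exact Matrix.diagonal_one
    · funext i
      refine inv_mul_cancel₀ ?_
      exact_mod_cast (ne_of_gt (lt_of_lt_of_le hlam_pos (hlb i)))
  have hleft : (V * E * star V) * (Q.map (fun x : ℝ => (x : ℂ))) = 1 := by
    rw [hQc]
    calc V * E * star V * (V * D * star V)
        = V * (E * ((star V * V) * (D * star V))) := by
          simp only [Matrix.mul_assoc]
      _ = 1 := by rw [hV1, Matrix.one_mul, ← Matrix.mul_assoc E D, hED, Matrix.one_mul, hV2]
  rw [Matrix.inv_eq_left_inv hleft]
  have hnV : ‖V‖ = 1 := CStarRing.norm_coe_unitary (⟨V, hV1, hV2⟩ : unitary (Matrix n n ℂ))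
  have hnVs : ‖star V‖ = 1 :=
    CStarRing.norm_coe_unitary (⟨star V, by simpa [star_star] using hV2, by simpa [star_star] using hV1⟩ : unitary (Matrix n n ℂ))
  calc ‖V * E * star V‖ ≤ ‖V * E‖ * ‖star V‖ := Matrix.l2_opNorm_mul _ _
    _ ≤ ‖V‖ * ‖E‖ * ‖star V‖ := by
        exact mul_le_mul_of_nonneg_right (Matrix.l2_opNorm_mul _ _) (norm_nonneg _)
    _ = ‖E‖ := by rw [hnV, hnVs, one_mul, mul_one]
    _ ≤ lam1⁻¹ := norm_diag _ (le_of_lt (by positivity)) hdiag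


/-- Decentralized small-gain bound: if ‖F⁻¹ Yᵢ‖ < λ₁ for every i, then
‖(Q ⊗ F)⁻¹ · diag(Y₁,…,Yₙ)‖ < 1. -/
theorem stmt_6 {n m : Type*} [Fintype n] [DecidableEq n] [Nonempty n]
    [Fintype m] [DecidableEq m] [Nonempty m]
    (Q : Matrix n n ℝ) (hQ : Q.IsHermitian) (hPD : Q.PosDef)
    (lam1 : ℝ) (hlam_pos : 0 < lam1)
    (hmem : ∃ i, hQ.eigenvalues i = lam1)
    (hlb : ∀ i, lam1 ≤ hQ.eigenvalues i)
    (F : Matrix m m ℂ) (hF : IsUnit F.det)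
    (Y : n → Matrix m m ℂ)
    (hY : ∀ i, opNorm (F⁻¹ * Y i) < lam1) :
    opNorm (((Q.map (fun x : ℝ => (x : ℂ))) ⊗ₖ F)⁻¹ * Matrix.reindex (Equiv.prodComm m n) (Equiv.prodComm m n) (Matrix.blockDiagonal Y)) < 1 := by
  classical
  have hY' : ∀ i, ‖F⁻¹ * Y i‖ < lam1 := fun i => by rw [← opNorm_eq_l2]; exact hY i
  obtain ⟨i₀, -, hi₀⟩ := Finset.exists_max_image Finset.univ
    (fun i => ‖F⁻¹ * Y i‖) Finset.univ_nonempty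
  set c : ℝ := ‖F⁻¹ * Y i₀‖ with hcdef
  have hc0 : 0 ≤ c := norm_nonneg _
  have hclt : c < lam1 := hY' i₀
  set Qc : Matrix n n ℂ := Q.map (fun x : ℝ => (x : ℂ)) with hQc
  set R : Matrix (n × m) (n × m) ℂ :=
    Matrix.reindex (Equiv.prodComm m n) (Equiv.prodComm m n) (Matrix.blockDiagonal Y) with hR
  rw [opNorm_eq_l2, Matrix.inv_kronecker]
  have hsplit : (Qc⁻¹ ⊗ₖ F⁻¹) = (Qc⁻¹ ⊗ₖ (1 : Matrix m m ℂ)) * ((1 : Matrix n n ℂ) ⊗ₖ F⁻¹) := by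
    rw [← Matrix.mul_kronecker_mul, Matrix.mul_one, Matrix.one_mul]
  rw [hsplit, Matrix.mul_assoc]
  have hdiag : ∀ i, ‖((hQ.eigenvalues i : ℝ) : ℂ)⁻¹‖ ≤ lam1⁻¹ := by
    intro i
    rw [norm_inv, Complex.norm_real, Real.norm_eq_abs,
      abs_of_pos (lt_of_lt_of_le hlam_pos (hlb i))]
    gcongr
    exact hlb i
  have h1 : ‖Qc⁻¹ ⊗ₖ (1 : Matrix m m ℂ)‖ ≤ lam1⁻¹ := by
    refine norm_block_snd (fun _ : m => Qc⁻¹) _ ?_ (le_of_lt (by positivity))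
      (fun _ => norm_map_inv_le Q hQ lam1 hlam_pos hlb hdiag)
    intro a i b j
    simp [Matrix.kroneckerMap_apply, Matrix.one_apply, mul_ite, mul_one, mul_zero]
  have h2 : ‖((1 : Matrix n n ℂ) ⊗ₖ F⁻¹) * R‖ ≤ c := by
    refine norm_block_fst (fun i => F⁻¹ * Y i) _ ?_ hc0 (fun i => hi₀ i (Finset.mem_univ i))
    intro i a j b
    rw [Matrix.mul_apply, Fintype.sum_prod_type]
    rw [Finset.sum_eq_single i]
    · by_cases hij : i = j
      · subst hij
        simp [hR, Matrix.one_apply, Matrix.blockDiagonal_apply, Matrix.mul_apply]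
      · simp [hR, Matrix.one_apply, Matrix.blockDiagonal_apply, hij]
    · intro j' _ hj'
      simp [Matrix.one_apply, Ne.symm hj']
    · simp
  calc ‖(Qc⁻¹ ⊗ₖ (1 : Matrix m m ℂ)) * (((1 : Matrix n n ℂ) ⊗ₖ F⁻¹) * R)‖
      ≤ ‖Qc⁻¹ ⊗ₖ (1 : Matrix m m ℂ)‖ * ‖((1 : Matrix n n ℂ) ⊗ₖ F⁻¹) * R‖ :=
        Matrix.l2_opNorm_mul _ _
    _ ≤ lam1⁻¹ * c := mul_le_mul h1 h2 (norm_nonneg _) (le_of_lt (by positivity))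
    _ < lam1⁻¹ * lam1 := mul_lt_mul_of_pos_left hclt (by positivity)
    _ = 1 := inv_mul_cancel₀ hlam_pos.ne'
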